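/- For positive integers y_1,…,y_k with sum equal to n-2, define F(y_1,…,y_k) = Σ_{i=1}^{k-1} (Σ_{j=1}^{i} y_j)(Σ_{j=i+1}^{k} y_j). Then the Wiener index of the caterpillar T(y_1,…,y_k) of order n (a path v_1,…,v_k with y_1 pendant vertices at v_1, y_k pendant vertices at v_k, and y_i−1 pendant vertices at v_i for 1<i<k) equals (n−1)^2 + F(y_1,…,y_k). -/

import Mathlib

open Finset

/-- Wiener index: sum of distances over all unordered pairs of vertices. -/
noncomputable def wienerIndex {V : Type*} [Fintype V] (G : SimpleGraph V) : ℕ :=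
  (∑ u : V, ∑ v : V, G.dist u v) / 2

/-- The degree of a vertex. -/
noncomputable def degN {V : Type*} (G : SimpleGraph V) (v : V) : ℕ :=
  Nat.card {u : V | G.Adj v u}

/-- The multiset of vertex degrees of a graph. -/
noncomputable def degMs {V : Type*} [Fintype V] (G : SimpleGraph V) : Multiset ℕ :=
  Finset.univ.val.map (degN G)

/-- `IsCaterpillar G k y` : `G` is the caterpillar `T(y 0, …, y (k-1))`, i.e. there is a
spine path `v 0, …, v (k-1)` whose vertices have degrees `y i + 1`, and every vertex off
the spine is a pendant leaf attached to the spine. -/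
def IsCaterpillar {V : Type*} (G : SimpleGraph V) (k : ℕ) (y : ℕ → ℕ) : Prop :=
  ∃ v : ℕ → V,
    (∀ i j, i < k → j < k → v i = v j → i = j) ∧
    (∀ i, i + 1 < k → G.Adj (v i) (v (i + 1))) ∧
    (∀ i, i < k → degN G (v i) = y i + 1) ∧
    (∀ u : V, (∀ i, i < k → u ≠ v i) → degN G u = 1 ∧ ∃ i, i < k ∧ G.Adj u (v i))

/-- `F(y_1, …, y_k) = ∑_{i=1}^{k-1} (∑_{j≤i} y_j)(∑_{j>i} y_j)` (0-indexed). -/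
def Fseq (k : ℕ) (y : ℕ → ℕ) : ℕ :=
  ∑ i ∈ Finset.range (k - 1),
    (∑ j ∈ Finset.range (i + 1), y j) * (∑ j ∈ Finset.Ico (i + 1) k, y j)

lemma dist_as_sum {k i j : ℕ} (hi : i < k) (hj : j < k) :
    Nat.dist i j = ∑ t ∈ range (k-1),
      ((if i ≤ t ∧ t < j then 1 else 0) + (if j ≤ t ∧ t < i then 1 else 0)) := by
  have key : ∀ a b : ℕ, b < k → ∑ t ∈ range (k-1), (if a ≤ t ∧ t < b then 1 else 0) = b - a := by
    intro a b hb
    rw [← Finset.card_filter]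
    have : (range (k-1)).filter (fun t => a ≤ t ∧ t < b) = Ico a b := by
      ext t; simp only [mem_filter, mem_range, mem_Ico]; omega
    rw [this, Nat.card_Ico]
  rw [Finset.sum_add_distrib, key i j hj, key j i hi, Nat.dist]
  omega

lemma sum_sum_dist (k : ℕ) (a : ℕ → ℕ) :
    ∑ i ∈ range k, ∑ j ∈ range k, a i * a j * Nat.dist i j
      = 2 * ∑ t ∈ range (k-1), (∑ i ∈ range (t+1), a i) * (∑ j ∈ Ico (t+1) k, a j) := by
  have step0 : ∑ i ∈ range k, ∑ j ∈ range k, a i * a j * Nat.dist i j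
      = ∑ i ∈ range k, ∑ j ∈ range k, ∑ t ∈ range (k-1),
        ((if i ≤ t then a i else 0) * (if t < j then a j else 0)
          + (if j ≤ t then a j else 0) * (if t < i then a i else 0)) := by
    apply Finset.sum_congr rfl; intro i hi
    apply Finset.sum_congr rfl; intro j hj
    simp only [mem_range] at hi hj
    rw [dist_as_sum hi hj, Finset.mul_sum]
    apply Finset.sum_congr rfl; intro t _
    split_ifs <;> ring_nf <;> omega
  have step1 : ∑ i ∈ range k, ∑ j ∈ range k, a i * a j * Nat.dist i j
      = ∑ t ∈ range (k-1), ∑ i ∈ range k, ∑ j ∈ range k,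
        ((if i ≤ t then a i else 0) * (if t < j then a j else 0)
          + (if j ≤ t then a j else 0) * (if t < i then a i else 0)) := by
    rw [step0]
    rw [show (∑ i ∈ range k, ∑ j ∈ range k, ∑ t ∈ range (k-1),
        ((if i ≤ t then a i else 0) * (if t < j then a j else 0)
          + (if j ≤ t then a j else 0) * (if t < i then a i else 0)))
      = ∑ i ∈ range k, ∑ t ∈ range (k-1), ∑ j ∈ range k,
        ((if i ≤ t then a i else 0) * (if t < j then a j else 0)
          + (if j ≤ t then a j else 0) * (if t < i then a i else 0))
      from Finset.sum_congr rfl (fun i _ => Finset.sum_comm)]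
    exact Finset.sum_comm
  rw [step1, Finset.mul_sum]
  apply Finset.sum_congr rfl; intro t ht
  simp only [mem_range] at ht
  have hfil1 : ∑ i ∈ range k, (if i ≤ t then a i else 0) = ∑ i ∈ range (t+1), a i := by
    rw [Finset.sum_ite, Finset.sum_const_zero, add_zero]
    apply Finset.sum_congr _ (fun _ _ => rfl)
    ext x; simp only [mem_filter, mem_range]; omega
  have hfil2 : ∑ j ∈ range k, (if t < j then a j else 0) = ∑ j ∈ Ico (t+1) k, a j := by
    rw [Finset.sum_ite, Finset.sum_const_zero, add_zero]
    apply Finset.sum_congr _ (fun _ _ => rfl)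
    ext x; simp only [mem_filter, mem_range, mem_Ico]; omega
  have expand : ∑ i ∈ range k, ∑ j ∈ range k,
        ((if i ≤ t then a i else 0) * (if t < j then a j else 0)
          + (if j ≤ t then a j else 0) * (if t < i then a i else 0))
      = (∑ i ∈ range k, (if i ≤ t then a i else 0)) * (∑ j ∈ range k, (if t < j then a j else 0))
        + (∑ i ∈ range k, (if t < i then a i else 0)) * (∑ j ∈ range k, (if j ≤ t then a j else 0)) := by
    rw [Finset.sum_mul_sum, Finset.sum_mul_sum]
    rw [← Finset.sum_add_distrib]
    apply Finset.sum_congr rfl; intro i _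
    rw [← Finset.sum_add_distrib]
    apply Finset.sum_congr rfl; intro j _
    ring
  rw [expand, hfil1, hfil2]
  ring

/-- The Wiener index of the caterpillar `T(y_1,…,y_k)` of order `n`
equals `(n-1)^2 + F(y_1,…,y_k)`. -/
theorem wiener_of_caterpillar {V : Type*} [Fintype V] (G : SimpleGraph V)
    (k n : ℕ) (y : ℕ → ℕ) (hk : 1 ≤ k)
    (hy : ∀ i, i < k → 1 ≤ y i)
    (hcard : Fintype.card V = n)
    (hn : n = 2 + ∑ i ∈ Finset.range k, y i)
    (hT : G.IsTree)
    (hcat : IsCaterpillar G k y) :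
    wienerIndex G = (n - 1) ^ 2 + Fseq k y := by
  classical
  obtain ⟨v, hinj, hadj, hdeg, hleaf⟩ := hcat
  have hconn : G.Connected := hT.isConnected
  -- basic degree facts
  have hdegN : ∀ a : V, degN G a = (univ.filter (G.Adj a ·)).card := by
    intro a
    rw [degN, Nat.card_eq_fintype_card]
    simp [Fintype.card_subtype]
  have hdeg_unique : ∀ u a b : V, degN G u = 1 → G.Adj u a → G.Adj u b → a = b := by
    intro u a b h1 ha hb
    rw [degN, Nat.card_eq_one_iff_unique] at h1
    obtain ⟨hs, -⟩ := h1
    exact congrArg Subtype.val (@Subsingleton.elim _ hs ⟨a, ha⟩ ⟨b, hb⟩)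
  -- the spine predicate
  set sp : V → Prop := fun u => ∃ i, i < k ∧ u = v i with hsp
  -- spine position of each vertex
  have hex : ∀ u : V, ∃ i, i < k ∧ (u = v i ∨ (G.Adj u (v i) ∧ ¬ sp u)) := by
    intro u
    by_cases h : sp u
    · obtain ⟨i, hi, he⟩ := h
      exact ⟨i, hi, Or.inl he⟩
    · obtain ⟨-, i, hi, ha⟩ := hleaf u (fun i hik he => h ⟨i, hik, he⟩)
      exact ⟨i, hi, Or.inr ⟨ha, h⟩⟩
  choose p hpk hpspec using hex
  have hp_spine : ∀ i, i < k → p (v i) = i := by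
    intro i hi
    rcases hpspec (v i) with heq | ⟨-, hns⟩
    · exact (hinj i (p (v i)) hi (hpk _) heq).symm
    · exact absurd ⟨i, hi, rfl⟩ hns
  have hleaf_deg : ∀ u, ¬ sp u → degN G u = 1 := by
    intro u h
    exact (hleaf u (fun i hik he => h ⟨i, hik, he⟩)).1
  have hp_leaf_adj : ∀ u, ¬ sp u → G.Adj u (v (p u)) := by
    intro u h
    rcases hpspec u with heq | ⟨ha, -⟩
    · exact absurd ⟨p u, hpk u, heq⟩ h
    · exact ha
  have hleaf_nbr : ∀ a b, ¬ sp a → G.Adj a b → b = v (p a) := by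
    intro a b ha hab
    exact hdeg_unique a b (v (p a)) (hleaf_deg a ha) hab (hp_leaf_adj a ha)
  -- spine walks
  have hwalk : ∀ d i j, i + d = j → j < k → ∃ w : G.Walk (v i) (v j),
      w.length = d ∧ w.support = (List.range' i (d+1)).map v := by
    intro d
    induction d with
    | zero =>
      intro i j hij hj
      obtain rfl : i = j := by omega
      exact ⟨SimpleGraph.Walk.nil, rfl, by simp⟩
    | succ d ih =>
      intro i j hij hj
      obtain ⟨w, hl, hs⟩ := ih (i+1) j (by omega) hj
      refine ⟨SimpleGraph.Walk.cons (hadj i (by omega)) w, by simp [hl], ?_⟩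
      rw [SimpleGraph.Walk.support_cons, hs]
      simp [List.range'_succ]
  -- no chords on the spine
  have hchord : ∀ i j, i < k → j < k → G.Adj (v i) (v j) → Nat.dist i j = 1 := by
    have aux : ∀ i j, i < j → j < k → G.Adj (v i) (v j) → j - i = 1 := by
      intro i j hij hj hA
      by_contra hne
      obtain ⟨w, hl, hs⟩ := hwalk (j - i) i j (by omega) hj
      have hwp : w.IsPath := by
        rw [SimpleGraph.Walk.isPath_def, hs]
        refine List.Nodup.map_on ?_ List.nodup_range'
        intro a ha b hb he
        rw [List.mem_range'] at ha hb
        exact hinj a b (by omega) (by omega) he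
      have hp2 : (SimpleGraph.Walk.cons hA SimpleGraph.Walk.nil).IsPath := by
        simp [SimpleGraph.Walk.isPath_def]
        intro h
        exact absurd (hinj i j (by omega) hj h) (by omega)
      have heq := (hT.existsUnique_path (v i) (v j)).unique hwp hp2
      have hlen := congrArg SimpleGraph.Walk.length heq
      rw [hl] at hlen
      simp at hlen
      omega
    intro i j hi hj hA
    rcases Nat.lt_trichotomy i j with h | h | h
    · rw [Nat.dist_eq_sub_of_le (le_of_lt h)]
      exact aux i j h hj hA
    · exact absurd (h ▸ hA) (G.irrefl)
    · rw [Nat.dist_comm, Nat.dist_eq_sub_of_le (le_of_lt h)]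
      exact aux j i h hi hA.symm
  -- Lipschitz bound for p along edges and walks
  have hstep : ∀ a b, G.Adj a b → Nat.dist (p a) (p b) ≤ 1 := by
    intro a b hab
    by_cases ha : sp a
    · by_cases hb : sp b
      · obtain ⟨i, hi, rfl⟩ := ha
        obtain ⟨j, hj, rfl⟩ := hb
        rw [hp_spine i hi, hp_spine j hj]
        exact le_of_eq (hchord i j hi hj hab)
      · have hba : a = v (p b) := hleaf_nbr b a hb hab.symm
        rw [hba, hp_spine (p b) (hpk b)]
        simp [Nat.dist_self]
    · have hba : b = v (p a) := hleaf_nbr a b ha hab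
      rw [hba, hp_spine (p a) (hpk a)]
      simp [Nat.dist_self]
  have hlip : ∀ (a b : V) (w : G.Walk a b), Nat.dist (p a) (p b) ≤ w.length := by
    intro a b w
    induction w with
    | nil => simp [Nat.dist_self]
    | @cons a c b h q ih =>
      calc Nat.dist (p a) (p b) ≤ Nat.dist (p a) (p c) + Nat.dist (p c) (p b) :=
            Nat.dist.triangle_inequality _ _ _
        _ ≤ 1 + q.length := Nat.add_le_add (hstep a c h) ih
        _ = (SimpleGraph.Walk.cons h q).length := by
            rw [SimpleGraph.Walk.length_cons]; omega
  -- distance between spine vertices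
  have hdist_spine : ∀ i j, i < k → j < k → G.dist (v i) (v j) = Nat.dist i j := by
    have aux : ∀ i j, i ≤ j → j < k → G.dist (v i) (v j) ≤ j - i := by
      intro i j hij hj
      obtain ⟨w, hl, -⟩ := hwalk (j - i) i j (by omega) hj
      exact hl ▸ SimpleGraph.dist_le w
    intro i j hi hj
    apply le_antisymm
    · rcases le_total i j with h | h
      · rw [Nat.dist_eq_sub_of_le h]; exact aux i j h hj
      · rw [Nat.dist_comm, Nat.dist_eq_sub_of_le h, SimpleGraph.dist_comm]
        exact aux j i h hi
    · obtain ⟨w, hw⟩ := hconn.exists_walk_length_eq_dist (v i) (v j)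
      calc Nat.dist i j = Nat.dist (p (v i)) (p (v j)) := by rw [hp_spine i hi, hp_spine j hj]
        _ ≤ w.length := hlip _ _ w
        _ = G.dist (v i) (v j) := hw
  -- pulling off a leaf
  have hL1 : ∀ w u : V, ¬ sp w → u ≠ w → G.dist u w = G.dist u (v (p w)) + 1 := by
    intro w u hw hne
    have hadj' : G.Adj (v (p w)) w := (hp_leaf_adj w hw).symm
    apply le_antisymm
    · calc G.dist u w ≤ G.dist u (v (p w)) + G.dist (v (p w)) w := hconn.dist_triangle
        _ = G.dist u (v (p w)) + 1 := by rw [SimpleGraph.dist_eq_one_iff_adj.mpr hadj']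
    · obtain ⟨q, hq⟩ := hconn.exists_walk_length_eq_dist w u
      cases q with
      | nil => exact absurd rfl hne.symm
      | @cons _ c _ h r =>
        have hc : c = v (p w) := hleaf_nbr w c hw h
        subst hc
        have h1 : G.dist (v (p w)) u ≤ r.length := SimpleGraph.dist_le r
        have h2 : r.length + 1 = G.dist w u := by
          rw [← hq]; rw [SimpleGraph.Walk.length_cons]
        have h3 : G.dist u (v (p w)) = G.dist (v (p w)) u := SimpleGraph.dist_comm
        have h4 : G.dist u w = G.dist w u := SimpleGraph.dist_comm
        omega
  -- the distance formula
  have hdistf : ∀ u w : V, u ≠ w → G.dist u w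
      = Nat.dist (p u) (p w) + (if sp u then 0 else 1) + (if sp w then 0 else 1) := by
    intro u w hne
    by_cases hu : sp u
    · by_cases hw : sp w
      · obtain ⟨i, hi, rfl⟩ := hu
        obtain ⟨j, hj, rfl⟩ := hw
        rw [hdist_spine i j hi hj, hp_spine i hi, hp_spine j hj,
          if_pos (⟨i, hi, rfl⟩ : sp (v i)), if_pos (⟨j, hj, rfl⟩ : sp (v j))]
        omega
      · rw [hL1 w u hw hne]
        obtain ⟨i, hi, rfl⟩ := hu
        rw [hdist_spine i (p w) hi (hpk w), hp_spine i hi,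
          if_pos (⟨i, hi, rfl⟩ : sp (v i)), if_neg hw]
    · by_cases hw : sp w
      · rw [SimpleGraph.dist_comm, hL1 u w hu (Ne.symm hne)]
        obtain ⟨j, hj, rfl⟩ := hw
        rw [hdist_spine j (p u) hj (hpk u), hp_spine j hj,
          if_pos (⟨j, hj, rfl⟩ : sp (v j)), if_neg hu, Nat.dist_comm]
      · rw [hL1 w u hw hne]
        have hne2 : v (p w) ≠ u := fun h => hu (h ▸ ⟨p w, hpk w, rfl⟩)
        rw [SimpleGraph.dist_comm, hL1 u (v (p w)) hu hne2,
          hdist_spine (p w) (p u) (hpk w) (hpk u), if_neg hu, if_neg hw, Nat.dist_comm]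
  -- counting fibers of p
  set m : ℕ → ℕ := fun i => (univ.filter (fun u => p u = i)).card with hmdef
  set c : ℕ → ℕ := fun i => (if 0 < i then 1 else 0) + (if i + 1 < k then 1 else 0) with hcdef
  have hspnbrcard : ∀ i, i < k →
      (((univ : Finset V).filter (G.Adj (v i) ·)).filter sp).card = c i := by
    intro i hi
    have hset : (((univ : Finset V).filter (G.Adj (v i) ·)).filter sp)
        = ((range k).filter (fun j => Nat.dist i j = 1)).image v := by
      ext u
      simp only [mem_filter, mem_univ, true_and, mem_image, mem_range]
      constructor
      · rintro ⟨hA, j, hj, rfl⟩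
        exact ⟨j, ⟨hj, hchord i j hi hj hA⟩, rfl⟩
      · rintro ⟨j, ⟨hj, hd⟩, rfl⟩
        have hcase : j = i + 1 ∨ i = j + 1 := by
          simp [Nat.dist] at hd; omega
        refine ⟨?_, j, hj, rfl⟩
        rcases hcase with h | h
        · subst h; exact hadj i hj
        · subst h; exact (hadj j hi).symm
    rw [hset, Finset.card_image_of_injOn (fun a ha b hb he =>
      hinj a b (mem_range.mp (mem_filter.mp ha).1) (mem_range.mp (mem_filter.mp hb).1) he)]
    simp only [hcdef]
    by_cases h0 : 0 < i
    · by_cases h1 : i + 1 < k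
      · rw [show (range k).filter (fun j => Nat.dist i j = 1) = {i-1, i+1} from by
          ext j; rw [mem_filter]; simp only [mem_range, mem_insert, mem_singleton, Nat.dist]; omega]
        rw [Finset.card_insert_of_notMem (by simp only [Finset.mem_singleton]; omega), Finset.card_singleton]
        simp [h0, h1]
      · rw [show (range k).filter (fun j => Nat.dist i j = 1) = {i-1} from by
          ext j; rw [mem_filter]; simp only [mem_range, mem_insert, mem_singleton, Nat.dist]; omega]
        simp [h0, h1]
    · by_cases h1 : i + 1 < k
      · rw [show (range k).filter (fun j => Nat.dist i j = 1) = {i+1} from by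
          ext j; rw [mem_filter]; simp only [mem_range, mem_insert, mem_singleton, Nat.dist]; omega]
        simp [h0, h1]
      · rw [show (range k).filter (fun j => Nat.dist i j = 1) = (∅ : Finset ℕ) from by
          ext j; rw [mem_filter]; simp only [mem_range, Finset.notMem_empty, iff_false, Nat.dist]; omega]
        simp [h0, h1]
  have hNsplit : ∀ i, i < k →
      (((univ : Finset V).filter (G.Adj (v i) ·)).filter (fun u => ¬ sp u)).card + c i
        = y i + 1 := by
    intro i hi
    have hpart := Finset.card_filter_add_card_filter_not
      (s := (univ : Finset V).filter (G.Adj (v i) ·)) (p := sp)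
    rw [hspnbrcard i hi] at hpart
    have hd := hdeg i hi
    rw [hdegN (v i)] at hd
    omega
  have hfiber : ∀ i, i < k → (univ : Finset V).filter (fun u => p u = i)
      = insert (v i) (((univ : Finset V).filter (G.Adj (v i) ·)).filter (fun u => ¬ sp u)) := by
    intro i hi
    ext u
    simp only [mem_filter, mem_univ, true_and, mem_insert]
    constructor
    · intro hpu
      by_cases hu : sp u
      · obtain ⟨j, hj, rfl⟩ := hu
        rw [hp_spine j hj] at hpu
        left; rw [hpu]
      · right
        refine ⟨?_, hu⟩
        have := hp_leaf_adj u hu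
        rw [hpu] at this
        exact this.symm
    · rintro (rfl | ⟨hA, hu⟩)
      · exact hp_spine i hi
      · have hvv : v (p u) = v i :=
          hdeg_unique u (v (p u)) (v i) (hleaf_deg u hu) (hp_leaf_adj u hu) hA.symm
        exact hinj _ _ (hpk u) hi hvv
  have hm : ∀ i, i < k → m i + c i = y i + 2 := by
    intro i hi
    have h1 : m i = (((univ : Finset V).filter (G.Adj (v i) ·)).filter (fun u => ¬ sp u)).card + 1 := by
      simp only [hmdef]
      rw [hfiber i hi, Finset.card_insert_of_notMem (by
        simp only [mem_filter]
        rintro ⟨-, hns⟩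
        exact hns ⟨i, hi, rfl⟩)]
    have h2 := hNsplit i hi
    omega
  -- partial sums of fiber sizes
  have hMsum : ∀ t, t + 1 < k → ∑ i ∈ range (t+1), m i = (∑ i ∈ range (t+1), y i) + 1 := by
    intro t ht
    have h1 : ∑ i ∈ range (t+1), (m i + c i) = ∑ i ∈ range (t+1), (y i + 2) :=
      Finset.sum_congr rfl (fun i hi => hm i (by rw [mem_range] at hi; omega))
    have h2 : ∑ i ∈ range (t+1), c i = 2 * t + 1 := by
      have hc' : ∀ i ∈ range (t+1), c i = (if 0 < i then 1 else 0) + 1 := by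
        intro i hi
        rw [mem_range] at hi
        simp only [hcdef]
        rw [if_pos (by omega : i + 1 < k)]
      rw [Finset.sum_congr rfl hc', Finset.sum_add_distrib, Finset.sum_const, ← Finset.card_filter]
      rw [show (range (t+1)).filter (fun i => 0 < i) = Ico 1 (t+1) from by
        ext j; simp [mem_Ico]; omega]
      rw [Nat.card_Ico, card_range]
      simp; omega
    rw [Finset.sum_add_distrib] at h1
    rw [h2] at h1
    have h3 : ∑ i ∈ range (t+1), (y i + 2) = (∑ i ∈ range (t+1), y i) + 2 * (t+1) := by
      rw [Finset.sum_add_distrib, Finset.sum_const, card_range, smul_eq_mul]; omega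
    omega
  have hIcosum : ∀ t, t + 1 < k → ∑ j ∈ Ico (t+1) k, m j = (∑ j ∈ Ico (t+1) k, y j) + 1 := by
    intro t ht
    have h1 : ∑ j ∈ Ico (t+1) k, (m j + c j) = ∑ j ∈ Ico (t+1) k, (y j + 2) :=
      Finset.sum_congr rfl (fun j hj => hm j (by rw [mem_Ico] at hj; omega))
    have h2 : ∑ j ∈ Ico (t+1) k, c j = 2 * (k - (t+1)) - 1 := by
      have hc' : ∀ j ∈ Ico (t+1) k, c j = 1 + (if j + 1 < k then 1 else 0) := by
        intro j hj
        rw [mem_Ico] at hj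
        simp only [hcdef]
        rw [if_pos (by omega : 0 < j)]
      rw [Finset.sum_congr rfl hc', Finset.sum_add_distrib, Finset.sum_const, ← Finset.card_filter]
      rw [show (Ico (t+1) k).filter (fun j => j + 1 < k) = Ico (t+1) (k-1) from by
        ext j; simp [mem_Ico]; omega]
      rw [Nat.card_Ico, Nat.card_Ico]
      simp; omega
    rw [Finset.sum_add_distrib] at h1
    rw [h2] at h1
    have h3 : ∑ j ∈ Ico (t+1) k, (y j + 2) = (∑ j ∈ Ico (t+1) k, y j) + 2 * (k - (t+1)) := by
      rw [Finset.sum_add_distrib, Finset.sum_const, Nat.card_Ico, smul_eq_mul]; omega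
    omega
  -- fiberwise summation
  have hfib : ∀ f : ℕ → ℕ, ∑ u : V, f (p u) = ∑ i ∈ range k, m i * f i := by
    intro f
    rw [← Finset.sum_fiberwise_of_maps_to (g := p) (t := range k)
      (fun u _ => mem_range.mpr (hpk u)) (fun u => f (p u))]
    apply Finset.sum_congr rfl
    intro i _
    calc ∑ x ∈ univ.filter (fun x => p x = i), f (p x)
        = ∑ x ∈ univ.filter (fun x => p x = i), f i :=
          Finset.sum_congr rfl (fun x hx => by rw [(mem_filter.mp hx).2])
      _ = m i * f i := by rw [Finset.sum_const, smul_eq_mul]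
  -- counting leaves
  have hspcard : ((univ : Finset V).filter sp).card = k := by
    have : (univ : Finset V).filter sp = (range k).image v := by
      ext u
      simp only [mem_filter, mem_univ, true_and, mem_image, mem_range]
      constructor
      · rintro ⟨i, hi, rfl⟩; exact ⟨i, hi, rfl⟩
      · rintro ⟨i, hi, rfl⟩; exact ⟨i, hi, rfl⟩
    rw [this, Finset.card_image_of_injOn (fun a ha b hb he =>
      hinj a b (mem_range.mp ha) (mem_range.mp hb) he), card_range]
  have hE : ((univ : Finset V).filter (fun u => ¬ sp u)).card + k = n := by
    have hpart := Finset.card_filter_add_card_filter_not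
      (s := (univ : Finset V)) (p := sp)
    rw [hspcard, card_univ, hcard] at hpart
    omega
  have hepsum : ∑ u : V, (if sp u then 0 else 1)
      = ((univ : Finset V).filter (fun u => ¬ sp u)).card := by
    rw [Finset.card_filter]
    apply Finset.sum_congr rfl
    intro u _
    by_cases h : sp u <;> simp [h]
  -- assembling the double sum of distances
  set E := ((univ : Finset V).filter (fun u => ¬ sp u)).card with hEdef
  set D2 := ∑ u : V, ∑ w : V, G.dist u w with hD2def
  have hperu : ∀ u : V,
      ∑ w : V, (Nat.dist (p u) (p w) + (if sp u then 0 else 1) + (if sp w then 0 else 1))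
      = (∑ w : V, G.dist u w) + 2 * (if sp u then 0 else 1) := by
    intro u
    rw [← Finset.add_sum_erase univ
        (fun w => Nat.dist (p u) (p w) + (if sp u then 0 else 1) + (if sp w then 0 else 1))
        (mem_univ u),
      ← Finset.add_sum_erase univ (fun w => G.dist u w) (mem_univ u)]
    have h1 : ∑ w ∈ univ.erase u,
        (Nat.dist (p u) (p w) + (if sp u then 0 else 1) + (if sp w then 0 else 1))
        = ∑ w ∈ univ.erase u, G.dist u w :=
      Finset.sum_congr rfl (fun w hw => (hdistf u w (Ne.symm (Finset.mem_erase.mp hw).1)).symm)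
    have h2 : G.dist u u = 0 := SimpleGraph.dist_self
    have h3 : Nat.dist (p u) (p u) = 0 := Nat.dist_self _
    rw [h1]
    omega
  have hPhisum : D2 + 2 * E
      = (∑ u : V, ∑ w : V, Nat.dist (p u) (p w)) + n * E + n * E := by
    have hA : ∑ u : V, ∑ w : V,
        (Nat.dist (p u) (p w) + (if sp u then 0 else 1) + (if sp w then 0 else 1))
        = D2 + 2 * E := by
      rw [Finset.sum_congr rfl (fun u _ => hperu u), Finset.sum_add_distrib,
        ← Finset.mul_sum, hepsum, hD2def]
    have hinner : ∀ u : V, ∑ w : V,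
        (Nat.dist (p u) (p w) + (if sp u then 0 else 1) + (if sp w then 0 else 1))
        = (∑ w : V, Nat.dist (p u) (p w)) + n * (if sp u then 0 else 1) + E := by
      intro u
      rw [Finset.sum_add_distrib, Finset.sum_add_distrib, Finset.sum_const, card_univ, hcard,
        smul_eq_mul, hepsum]
    have hB : ∑ u : V, ∑ w : V,
        (Nat.dist (p u) (p w) + (if sp u then 0 else 1) + (if sp w then 0 else 1))
        = (∑ u : V, ∑ w : V, Nat.dist (p u) (p w)) + n * E + n * E := by
      rw [Finset.sum_congr rfl (fun u _ => hinner u), Finset.sum_add_distrib,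
        Finset.sum_add_distrib, ← Finset.mul_sum, hepsum, Finset.sum_const, card_univ, hcard,
        smul_eq_mul]
    rw [← hA, hB]
  have hNd : ∑ u : V, ∑ w : V, Nat.dist (p u) (p w)
      = ∑ i ∈ range k, ∑ j ∈ range k, m i * m j * Nat.dist i j := by
    have hinner : ∀ u : V, ∑ w : V, Nat.dist (p u) (p w)
        = ∑ j ∈ range k, m j * Nat.dist (p u) j :=
      fun u => hfib (fun j => Nat.dist (p u) j)
    rw [Finset.sum_congr rfl (fun u _ => hinner u),
      hfib (fun i => ∑ j ∈ range k, m j * Nat.dist i j)]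
    apply Finset.sum_congr rfl; intro i _
    rw [Finset.mul_sum]
    apply Finset.sum_congr rfl; intro j _
    ring
  have hprodsum : ∑ t ∈ range (k-1), (∑ i ∈ range (t+1), m i) * (∑ j ∈ Ico (t+1) k, m j)
      = Fseq k y + (k-1) * (n-1) := by
    have hterm : ∀ t ∈ range (k-1), (∑ i ∈ range (t+1), m i) * (∑ j ∈ Ico (t+1) k, m j)
        = (∑ i ∈ range (t+1), y i) * (∑ j ∈ Ico (t+1) k, y j) + (n-1) := by
      intro t ht
      rw [mem_range] at ht
      have ht' : t + 1 < k := by omega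
      rw [hMsum t ht', hIcosum t ht']
      have hsplit : (∑ i ∈ range (t+1), y i) + (∑ j ∈ Ico (t+1) k, y j) = ∑ i ∈ range k, y i :=
        Finset.sum_range_add_sum_Ico y (by omega)
      have hexp : ∀ A B : ℕ, (A+1)*(B+1) = A*B + (A+B) + 1 := by intros; ring
      rw [hexp, hsplit]
      omega
    rw [Finset.sum_congr rfl hterm, Finset.sum_add_distrib, Finset.sum_const, card_range,
      smul_eq_mul, Fseq]
  have hkey : D2 + 2 * E = 2 * (Fseq k y + (k-1) * (n-1)) + n * E + n * E := by
    rw [hPhisum, hNd, sum_sum_dist k m, hprodsum, Nat.mul_add]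
  obtain ⟨k1, rfl⟩ : ∃ k1, k = k1 + 1 := ⟨k - 1, by omega⟩
  have hn2 : 2 ≤ n := by omega
  have hEn : E + (k1 + 1) = n := hE
  have e1 : n - 1 = E + k1 := by omega
  have e2 : n = E + k1 + 1 := by omega
  have e3 : k1 + 1 - 1 = k1 := by omega
  rw [e3, e1, e2] at hkey
  have hkey2 : D2 + 2 * E = 2 * ((E + k1)^2 + Fseq (k1+1) y) + 2 * E := by
    rw [hkey]; ring
  have hD2v : D2 = 2 * ((E + k1)^2 + Fseq (k1+1) y) := Nat.add_right_cancel hkey2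
  show (∑ u : V, ∑ w : V, G.dist u w) / 2 = (n-1)^2 + Fseq (k1+1) y
  rw [← hD2def, hD2v, e1]
  exact Nat.mul_div_cancel_left _ (by norm_num)
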